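/- Let N ≥ 2, ε > 0, f : ℝ → ℝ continuous strictly increasing with f(0) = 0, λ < 0, and let U ∈ C²([0,1]) satisfy −ε²(U'' + (N−1)/x · U') + f(U) = 0 on (0,1), U'(0) = 0, U(1) = λ. Then λ ≤ U(x) ≤ 0 and U'(x) ≤ 0 for all x ∈ [0,1]. -/

import Mathlib

theorem stmt6 (N : ℕ) (hN : 2 ≤ N) (ε : ℝ) (hε : 0 < ε)
    (f : ℝ → ℝ) (hf : Continuous f) (hmono : StrictMono f) (hf0 : f 0 = 0)
    (lam : ℝ) (hlam : lam < 0)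
    (U : ℝ → ℝ) (hU : ContDiffOn ℝ 2 U (Set.Icc 0 1))
    (hode : ∀ x ∈ Set.Ioo (0:ℝ) 1,
      -ε ^ 2 * (deriv (deriv U) x + ((N:ℝ) - 1) / x * deriv U x) + f (U x) = 0)
    (hU'0 : deriv U 0 = 0) (hU1 : U 1 = lam) :
    ∀ x ∈ Set.Icc (0:ℝ) 1, lam ≤ U x ∧ U x ≤ 0 ∧ deriv U x ≤ 0 := by
  obtain ⟨k, rfl⟩ : ∃ k, N = k + 2 := ⟨N - 2, by omega⟩
  have hsub : Set.Ioo (0:ℝ) 1 ⊆ Set.Icc 0 1 := Set.Ioo_subset_Icc_self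
  have hUD : UniqueDiffOn ℝ (Set.Icc (0:ℝ) 1) := uniqueDiffOn_Icc zero_lt_one
  have hc : ContinuousOn U (Set.Icc 0 1) := hU.continuousOn
  set D : ℝ → ℝ := derivWithin U (Set.Icc 0 1) with hDdef
  have hDc : ContinuousOn D (Set.Icc 0 1) := hU.continuousOn_derivWithin hUD one_le_two
  have hDeq : ∀ x ∈ Set.Ioo (0:ℝ) 1, D x = deriv U x := fun x hx =>
    derivWithin_of_mem_nhds (Icc_mem_nhds hx.1 hx.2)
  have hUo : ContDiffOn ℝ 2 U (Set.Ioo 0 1) := hU.mono hsub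
  have hU'cd : ContDiffOn ℝ 1 (deriv U) (Set.Ioo 0 1) :=
    hUo.deriv_of_isOpen isOpen_Ioo (by norm_num)
  have hU'' : ∀ x ∈ Set.Ioo (0:ℝ) 1, HasDerivAt (deriv U) (deriv (deriv U) x) x := by
    intro x hx
    exact ((hU'cd.differentiableOn one_ne_zero x hx).differentiableAt
      (isOpen_Ioo.mem_nhds hx)).hasDerivAt
  set W : ℝ → ℝ := fun x => x ^ (k + 1) * D x with hWdef
  have hWc : ContinuousOn W (Set.Icc 0 1) := (continuous_pow _).continuousOn.mul hDc
  have hW0 : W 0 = 0 := by simp [hWdef]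
  have hWD : ∀ x ∈ Set.Ioo (0:ℝ) 1, HasDerivAt W (x ^ (k+1) * (f (U x) / ε ^ 2)) x := by
    intro x hx
    have hx0 : x ≠ 0 := ne_of_gt hx.1
    have hε2 : (ε:ℝ) ^ 2 ≠ 0 := by positivity
    have h1 : HasDerivAt (fun y => y ^ (k+1) * deriv U y)
        ((k+1 : ℝ) * x ^ k * deriv U x + x ^ (k+1) * deriv (deriv U) x) x := by
      have := (hasDerivAt_pow (k+1) x).mul (hU'' x hx)
      simpa [Pi.mul_def] using this
    have h2 : (fun y => y ^ (k+1) * deriv U y) =ᶠ[nhds x] W := by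
      filter_upwards [isOpen_Ioo.mem_nhds hx] with y hy
      simp [hWdef, hDeq y hy]
    have h3 := h1.congr_of_eventuallyEq h2.symm
    have hode' := hode x hx
    have h4 : deriv (deriv U) x + ((k:ℝ) + 2 - 1) / x * deriv U x = f (U x) / ε ^ 2 := by
      push_cast at hode'
      field_simp at hode' ⊢
      linarith
    have h5 : deriv (deriv U) x = f (U x) / ε ^ 2 - ((k:ℝ) + 1) / x * deriv U x := by
      have : ((k:ℝ) + 2 - 1) = (k:ℝ) + 1 := by ring
      rw [this] at h4; linarith
    have h6 : (k+1 : ℝ) * x ^ k * deriv U x + x ^ (k+1) * deriv (deriv U) x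
        = x ^ (k+1) * (f (U x) / ε ^ 2) := by
      rw [h5]
      have hpow : x ^ (k+1) = x ^ k * x := pow_succ x k
      field_simp
      ring
    rw [h6] at h3
    exact h3
  -- Step B: U ≤ 0 on [0,1]
  have hUle : ∀ x ∈ Set.Icc (0:ℝ) 1, U x ≤ 0 := by
    by_contra hcon
    push_neg at hcon
    obtain ⟨z, hz, hz0⟩ := hcon
    obtain ⟨x₀, hx₀, hmax⟩ := isCompact_Icc.exists_isMaxOn
      (Set.nonempty_Icc.2 zero_le_one) hc
    have hx₀pos : 0 < U x₀ := lt_of_lt_of_le hz0 (hmax hz)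
    have hx₀lt : x₀ < 1 := by
      rcases lt_or_eq_of_le hx₀.2 with h | h
      · exact h
      · exfalso; rw [h, hU1] at hx₀pos; linarith
    have hWx₀ : W x₀ = 0 := by
      rcases eq_or_lt_of_le hx₀.1 with h | h
      · rw [hWdef, ← h]; simp
      · have hloc : IsLocalMax U x₀ := hmax.isLocalMax (Icc_mem_nhds h hx₀lt)
        have hd0 : deriv U x₀ = 0 := hloc.deriv_eq_zero
        simp [hWdef, hDeq x₀ ⟨h, hx₀lt⟩, hd0]
    set T := Set.Icc x₀ 1 ∩ U ⁻¹' {0} with hTdef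
    have hCx₀ : ContinuousOn U (Set.Icc x₀ 1) := hc.mono (Set.Icc_subset_Icc hx₀.1 le_rfl)
    have hTne : T.Nonempty := by
      have h0 : (0:ℝ) ∈ Set.Icc (U 1) (U x₀) := ⟨by rw [hU1]; linarith, hx₀pos.le⟩
      obtain ⟨c, hcmem, hceq⟩ := intermediate_value_Icc' hx₀lt.le hCx₀ h0
      exact ⟨c, hcmem, hceq⟩
    have hTclosed : IsClosed T :=
      hCx₀.preimage_isClosed_of_isClosed isClosed_Icc isClosed_singleton
    have hTbdd : BddBelow T := ⟨x₀, fun y hy => hy.1.1⟩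
    set b := sInf T with hbdef
    have hbT : b ∈ T := hTclosed.csInf_mem hTne hTbdd
    have hUb : U b = 0 := hbT.2
    have hbx₀ : x₀ < b := by
      rcases lt_or_eq_of_le hbT.1.1 with h | h
      · exact h
      · exfalso; rw [← h] at hUb; rw [hUb] at hx₀pos; linarith
    have hb1 : b < 1 := by
      rcases lt_or_eq_of_le hbT.1.2 with h | h
      · exact h
      · exfalso; rw [h, hU1] at hUb; linarith
    have hposU : ∀ y ∈ Set.Ico x₀ b, 0 < U y := by
      intro y hy
      by_contra hle
      push_neg at hle
      have hC : ContinuousOn U (Set.Icc x₀ y) :=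
        hc.mono (Set.Icc_subset_Icc hx₀.1 (le_trans hy.2.le hbT.1.2))
      have h0 : (0:ℝ) ∈ Set.Icc (U y) (U x₀) := ⟨hle, hx₀pos.le⟩
      obtain ⟨c, hcmem, hceq⟩ := intermediate_value_Icc' hy.1 hC h0
      have hcb : b ≤ c := csInf_le hTbdd
        ⟨⟨hcmem.1, le_trans hcmem.2 (le_trans hy.2.le hbT.1.2)⟩, hceq⟩
      have : c ≤ y := hcmem.2
      linarith [hy.2]
    have hsub2 : Set.Icc x₀ b ⊆ Set.Icc (0:ℝ) 1 := Set.Icc_subset_Icc hx₀.1 hbT.1.2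
    have hWmono : StrictMonoOn W (Set.Icc x₀ b) := by
      apply strictMonoOn_of_deriv_pos (convex_Icc _ _) (hWc.mono hsub2)
      intro x hx
      rw [interior_Icc] at hx
      have hxIoo : x ∈ Set.Ioo (0:ℝ) 1 := ⟨lt_of_le_of_lt hx₀.1 hx.1, lt_trans hx.2 hb1⟩
      rw [(hWD x hxIoo).deriv]
      have hfpos : 0 < f (U x) := by
        rw [← hf0]; exact hmono (hposU x ⟨hx.1.le, hx.2⟩)
      have hxp : (0:ℝ) < x := hxIoo.1
      positivity
    have hU'pos : ∀ x ∈ Set.Ioo x₀ b, 0 < deriv U x := by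
      intro x hx
      have hxIoo : x ∈ Set.Ioo (0:ℝ) 1 := ⟨lt_of_le_of_lt hx₀.1 hx.1, lt_trans hx.2 hb1⟩
      have hWx : 0 < W x := by
        have := hWmono (Set.left_mem_Icc.2 hbx₀.le) ⟨hx.1.le, hx.2.le⟩ hx.1
        rwa [hWx₀] at this
      rw [hWdef] at hWx
      simp only at hWx
      have hxp : (0:ℝ) < x ^ (k+1) := pow_pos hxIoo.1 _
      have hDx : 0 < D x := by nlinarith [hWx, hxp]
      rw [← hDeq x hxIoo]
      exact hDx
    have hUmono : StrictMonoOn U (Set.Icc x₀ b) := by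
      apply strictMonoOn_of_deriv_pos (convex_Icc _ _) (hc.mono hsub2)
      intro x hx
      rw [interior_Icc] at hx
      exact hU'pos x hx
    have hlt : U x₀ < U b :=
      hUmono (Set.left_mem_Icc.2 hbx₀.le) (Set.right_mem_Icc.2 hbx₀.le) hbx₀
    rw [hUb] at hlt; linarith
  -- Step C
  have hWanti : AntitoneOn W (Set.Icc 0 1) := by
    apply antitoneOn_of_deriv_nonpos (convex_Icc _ _) hWc
    · intro x hx
      rw [interior_Icc] at hx
      exact (hWD x hx).differentiableAt.differentiableWithinAt
    · intro x hx
      rw [interior_Icc] at hx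
      rw [(hWD x hx).deriv]
      have hfle : f (U x) ≤ 0 := by
        rw [← hf0]; exact hmono.monotone (hUle x (hsub hx))
      have h1 : f (U x) / ε ^ 2 ≤ 0 := div_nonpos_of_nonpos_of_nonneg hfle (by positivity)
      exact mul_nonpos_of_nonneg_of_nonpos (pow_nonneg hx.1.le _) h1
  have hWle : ∀ x ∈ Set.Icc (0:ℝ) 1, W x ≤ 0 := by
    intro x hx
    have := hWanti (Set.left_mem_Icc.2 zero_le_one) hx hx.1
    rwa [hW0] at this
  have hU'le : ∀ x ∈ Set.Ioo (0:ℝ) 1, deriv U x ≤ 0 := by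
    intro x hx
    have h1 := hWle x (hsub hx)
    rw [hWdef] at h1
    simp only at h1
    have hxp : (0:ℝ) < x ^ (k+1) := pow_pos hx.1 _
    have hDx : D x ≤ 0 := by nlinarith [h1, hxp]
    rw [← hDeq x hx]
    exact hDx
  have hUanti : AntitoneOn U (Set.Icc 0 1) := by
    apply antitoneOn_of_deriv_nonpos (convex_Icc _ _) hc
    · rw [interior_Icc]
      exact (hU.differentiableOn two_ne_zero).mono hsub
    · intro x hx
      rw [interior_Icc] at hx
      exact hU'le x hx
  intro x hx
  refine ⟨?_, hUle x hx, ?_⟩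
  · rw [← hU1]
    exact hUanti hx (Set.right_mem_Icc.2 zero_le_one) hx.2
  · rcases eq_or_lt_of_le hx.1 with h0 | h0
    · rw [← h0, hU'0]
    rcases eq_or_lt_of_le hx.2 with h1 | h1
    · rw [h1]
      by_cases hd : DifferentiableAt ℝ U 1
      · have hW1 := hWle 1 (Set.right_mem_Icc.2 zero_le_one)
        rw [hWdef] at hW1
        simp only [one_pow, one_mul] at hW1
        rw [← hd.derivWithin (hUD 1 (Set.right_mem_Icc.2 zero_le_one))]
        exact hW1
      · rw [deriv_zero_of_not_differentiableAt hd]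
    · exact hU'le x ⟨h0, h1⟩
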